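/- Let k be a field and consider the polynomial ring k[X₁,X₂,X₃]. The ideal q' = (X₃² − X₁², X₂X₃, X₂² − X₁²) is a primary ideal whose radical equals the maximal ideal m = (X₁, X₂, X₃), and the quotient ring k[X₁,X₂,X₃]/q' is a finite-dimensional k-vector space of dimension 8 = 2³. -/

import Mathlib

open MvPolynomial

noncomputable section PrimaryEightAux

section VecLemmas
variable {α : Type*} (x0 x1 x2 x3 x4 x5 x6 x7 : α)
lemma pe_cv0 : ![x0,x1,x2,x3,x4,x5,x6,x7] (0:Fin 8) = x0 := rfl
lemma pe_cv1 : ![x0,x1,x2,x3,x4,x5,x6,x7] (1:Fin 8) = x1 := rfl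
lemma pe_cv2 : ![x0,x1,x2,x3,x4,x5,x6,x7] (2:Fin 8) = x2 := rfl
lemma pe_cv3 : ![x0,x1,x2,x3,x4,x5,x6,x7] (3:Fin 8) = x3 := rfl
lemma pe_cv4 : ![x0,x1,x2,x3,x4,x5,x6,x7] (4:Fin 8) = x4 := rfl
lemma pe_cv5 : ![x0,x1,x2,x3,x4,x5,x6,x7] (5:Fin 8) = x5 := rfl
lemma pe_cv6 : ![x0,x1,x2,x3,x4,x5,x6,x7] (6:Fin 8) = x6 := rfl
lemma pe_cv7 : ![x0,x1,x2,x3,x4,x5,x6,x7] (7:Fin 8) = x7 := rfl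
end VecLemmas

attribute [local simp] pe_cv0 pe_cv1 pe_cv2 pe_cv3 pe_cv4 pe_cv5 pe_cv6 pe_cv7

variable {k : Type*} [Field k]

/-- The polynomial ring `k[X₀,X₁,X₂]`. -/
abbrev PE_P (k : Type*) [Field k] := MvPolynomial (Fin 3) k

/-- The ideal `q'`. -/
def PE_q (k : Type*) [Field k] : Ideal (PE_P k) :=
  Ideal.span {(X 2 : PE_P k) ^ 2 - X 0 ^ 2, X 1 * X 2, X 1 ^ 2 - X 0 ^ 2}

lemma PE_mem_q {p a b c : PE_P k}
    (h : p = a * ((X 2 : PE_P k) ^ 2 - X 0 ^ 2) + b * (X 1 * X 2) + c * (X 1 ^ 2 - X 0 ^ 2)) :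
    p ∈ PE_q k := by
  subst h
  refine add_mem (add_mem ?_ ?_) ?_ <;>
    exact Ideal.mul_mem_left _ _ (Ideal.subset_span (by simp [PE_q]))

lemma PE_h021 : (X 0 : PE_P k) ^ 2 * X 1 ∈ PE_q k :=
  PE_mem_q (a := -(X 1)) (b := X 2) (c := 0) (by ring)

lemma PE_h022 : (X 0 : PE_P k) ^ 2 * X 2 ∈ PE_q k :=
  PE_mem_q (a := 0) (b := X 1) (c := -(X 2)) (by ring)

lemma PE_h04 : (X 0 : PE_P k) ^ 4 ∈ PE_q k :=
  PE_mem_q (a := -(X 0 ^ 2)) (b := X 1 * X 2) (c := -(X 2 ^ 2)) (by ring)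

lemma PE_h14 : (X 1 : PE_P k) ^ 4 ∈ PE_q k :=
  PE_mem_q (a := -(X 1 ^ 2)) (b := X 1 * X 2) (c := X 1 ^ 2) (by ring)

lemma PE_h24 : (X 2 : PE_P k) ^ 4 ∈ PE_q k :=
  PE_mem_q (a := X 2 ^ 2) (b := X 1 * X 2) (c := -(X 2 ^ 2)) (by ring)

/-! ### The maximal ideal -/

lemma PE_m_eq_ker :
    Ideal.span {(X 0 : PE_P k), X 1, X 2} =
      RingHom.ker (constantCoeff : MvPolynomial (Fin 3) k →+* k) := by
  have hset : ({(X 0 : PE_P k), X 1, X 2} : Set (PE_P k)) = X '' Set.univ := by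
    ext p
    constructor
    · rintro (rfl | rfl | rfl)
      exacts [⟨0, trivial, rfl⟩, ⟨1, trivial, rfl⟩, ⟨2, trivial, rfl⟩]
    · rintro ⟨i, -, rfl⟩
      fin_cases i <;> simp
  apply le_antisymm
  · rw [Ideal.span_le]
    rintro p (rfl | rfl | rfl) <;> simp [RingHom.mem_ker]
  · intro p hp
    rw [RingHom.mem_ker] at hp
    rw [hset, mem_ideal_span_X_image]
    intro m hm
    have hm0 : m ≠ 0 := by
      rintro rfl
      rw [mem_support_iff] at hm
      exact hm hp
    obtain ⟨i, hi⟩ := Finsupp.ne_iff.mp hm0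
    exact ⟨i, trivial, by simpa using hi⟩

lemma PE_m_max : (Ideal.span {(X 0 : PE_P k), X 1, X 2}).IsMaximal := by
  rw [PE_m_eq_ker]
  exact RingHom.ker_isMaximal_of_surjective _ (fun a => ⟨C a, constantCoeff_C _ a⟩)

lemma PE_radical :
    (PE_q k).radical = Ideal.span {(X 0 : PE_P k), X 1, X 2} := by
  apply le_antisymm
  · have hle : PE_q k ≤ Ideal.span {(X 0 : PE_P k), X 1, X 2} := by
      rw [PE_q, Ideal.span_le]
      have h0 : (X 0 : PE_P k) ∈ Ideal.span {(X 0 : PE_P k), X 1, X 2} :=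
        Ideal.subset_span (by simp)
      have h1 : (X 1 : PE_P k) ∈ Ideal.span {(X 0 : PE_P k), X 1, X 2} :=
        Ideal.subset_span (by simp)
      have h2 : (X 2 : PE_P k) ∈ Ideal.span {(X 0 : PE_P k), X 1, X 2} :=
        Ideal.subset_span (by simp)
      rintro p (rfl | rfl | rfl)
      · exact sub_mem (by rw [sq]; exact Ideal.mul_mem_left _ _ h2)
          (by rw [sq]; exact Ideal.mul_mem_left _ _ h0)
      · exact Ideal.mul_mem_left _ _ h2
      · exact sub_mem (by rw [sq]; exact Ideal.mul_mem_left _ _ h1)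
          (by rw [sq]; exact Ideal.mul_mem_left _ _ h0)
    calc (PE_q k).radical ≤ (Ideal.span {(X 0 : PE_P k), X 1, X 2}).radical :=
          Ideal.radical_mono hle
      _ = _ := (PE_m_max.isPrime).radical
  · rw [Ideal.span_le]
    rintro p (rfl | rfl | rfl)
    · exact ⟨4, PE_h04⟩
    · exact ⟨4, PE_h14⟩
    · exact ⟨4, PE_h24⟩

lemma PE_primary : (PE_q k).IsPrimary :=
  Ideal.isPrimary_of_isMaximal_radical (by rw [PE_radical]; exact PE_m_max)

/-! ### The 8-dimensional representation -/

def PE_N0 (k : Type*) [Field k] : (Fin 8 → k) →ₗ[k] (Fin 8 → k) where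
  toFun v := ![0, v 0, 0, 0, v 1, v 2, v 3, v 4]
  map_add' u v := by funext i; fin_cases i <;> simp
  map_smul' c v := by funext i; fin_cases i <;> simp

def PE_N1 (k : Type*) [Field k] : (Fin 8 → k) →ₗ[k] (Fin 8 → k) where
  toFun v := ![0, 0, v 0, 0, v 2, v 1, 0, v 5]
  map_add' u v := by funext i; fin_cases i <;> simp
  map_smul' c v := by funext i; fin_cases i <;> simp

def PE_N2 (k : Type*) [Field k] : (Fin 8 → k) →ₗ[k] (Fin 8 → k) where
  toFun v := ![0, 0, 0, v 0, v 3, 0, v 1, v 6]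
  map_add' u v := by funext i; fin_cases i <;> simp
  map_smul' c v := by funext i; fin_cases i <;> simp

lemma PE_N0_apply (v : Fin 8 → k) : PE_N0 k v = ![0, v 0, 0, 0, v 1, v 2, v 3, v 4] := rfl
lemma PE_N1_apply (v : Fin 8 → k) : PE_N1 k v = ![0, 0, v 0, 0, v 2, v 1, 0, v 5] := rfl
lemma PE_N2_apply (v : Fin 8 → k) : PE_N2 k v = ![0, 0, 0, v 0, v 3, 0, v 1, v 6] := rfl

def PE_NS (k : Type*) [Field k] : Set (Module.End k (Fin 8 → k)) := {PE_N0 k, PE_N1 k, PE_N2 k}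

lemma PE_c01 : PE_N0 k * PE_N1 k = PE_N1 k * PE_N0 k := by
  refine LinearMap.ext fun v => ?_
  funext i; fin_cases i <;> simp [PE_N0_apply, PE_N1_apply, Module.End.mul_apply]

lemma PE_c02 : PE_N0 k * PE_N2 k = PE_N2 k * PE_N0 k := by
  refine LinearMap.ext fun v => ?_
  funext i; fin_cases i <;> simp [PE_N0_apply, PE_N2_apply, Module.End.mul_apply]

lemma PE_c12 : PE_N1 k * PE_N2 k = PE_N2 k * PE_N1 k := by
  refine LinearMap.ext fun v => ?_
  funext i; fin_cases i <;> simp [PE_N1_apply, PE_N2_apply, Module.End.mul_apply]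

lemma PE_r1 : PE_N2 k * PE_N2 k = PE_N0 k * PE_N0 k := by
  refine LinearMap.ext fun v => ?_
  funext i; fin_cases i <;> simp [PE_N0_apply, PE_N2_apply, Module.End.mul_apply]

lemma PE_r2 : PE_N1 k * PE_N2 k = 0 := by
  refine LinearMap.ext fun v => ?_
  funext i; fin_cases i <;> simp [PE_N1_apply, PE_N2_apply, Module.End.mul_apply]

lemma PE_r3 : PE_N1 k * PE_N1 k = PE_N0 k * PE_N0 k := by
  refine LinearMap.ext fun v => ?_
  funext i; fin_cases i <;> simp [PE_N0_apply, PE_N1_apply, Module.End.mul_apply]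

lemma PE_comm : ∀ a ∈ PE_NS k, ∀ b ∈ PE_NS k, a * b = b * a := by
  rintro a (rfl | rfl | rfl) b (rfl | rfl | rfl)
  · rfl
  · exact PE_c01
  · exact PE_c02
  · exact PE_c01.symm
  · rfl
  · exact PE_c12
  · exact PE_c02.symm
  · exact PE_c12.symm
  · rfl

instance : CommRing (Algebra.adjoin k (PE_NS k)) := Algebra.adjoinCommRingOfComm k PE_comm

def PE_f : Fin 3 → Algebra.adjoin k (PE_NS k) :=
  ![⟨PE_N0 k, Algebra.subset_adjoin (by simp [PE_NS])⟩,
    ⟨PE_N1 k, Algebra.subset_adjoin (by simp [PE_NS])⟩,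
    ⟨PE_N2 k, Algebra.subset_adjoin (by simp [PE_NS])⟩]

lemma PE_f0 : ((PE_f 0 : Algebra.adjoin k (PE_NS k)) : Module.End k (Fin 8 → k)) = PE_N0 k := rfl
lemma PE_f1 : ((PE_f 1 : Algebra.adjoin k (PE_NS k)) : Module.End k (Fin 8 → k)) = PE_N1 k := rfl
lemma PE_f2 : ((PE_f 2 : Algebra.adjoin k (PE_NS k)) : Module.End k (Fin 8 → k)) = PE_N2 k := rfl

def PE_phi : PE_P k →ₐ[k] Algebra.adjoin k (PE_NS k) := aeval PE_f

lemma PE_phi_g1 : PE_phi (k := k) ((X 2 : PE_P k) ^ 2 - X 0 ^ 2) = 0 := by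
  apply Subtype.ext
  rw [PE_phi, map_sub, map_pow, map_pow, aeval_X, aeval_X]
  push_cast
  rw [PE_f0, PE_f2, sq, sq, PE_r1]
  simp

lemma PE_phi_g2 : PE_phi (k := k) ((X 1 : PE_P k) * X 2) = 0 := by
  apply Subtype.ext
  rw [PE_phi, map_mul, aeval_X, aeval_X]
  push_cast
  rw [PE_f1, PE_f2, PE_r2]

lemma PE_phi_g3 : PE_phi (k := k) ((X 1 : PE_P k) ^ 2 - X 0 ^ 2) = 0 := by
  apply Subtype.ext
  rw [PE_phi, map_sub, map_pow, map_pow, aeval_X, aeval_X]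
  push_cast
  rw [PE_f0, PE_f1, sq, sq, PE_r3]
  simp

lemma PE_phi_ker : ∀ a ∈ PE_q k, PE_phi (k := k) a = 0 := by
  have key : PE_q k ≤ RingHom.ker (PE_phi (k := k)).toRingHom := by
    rw [PE_q, Ideal.span_le]
    rintro p (rfl | rfl | rfl)
    · exact PE_phi_g1
    · exact PE_phi_g2
    · exact PE_phi_g3
  intro a ha
  exact RingHom.mem_ker.mp (key ha)

def PE_phibar : (PE_P k ⧸ PE_q k) →ₐ[k] Algebra.adjoin k (PE_NS k) :=
  Ideal.Quotient.liftₐ (PE_q k) (PE_phi (k := k)) PE_phi_ker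

def PE_e0 (k : Type*) [Field k] : Fin 8 → k := Pi.single 0 1

def PE_mu : (PE_P k ⧸ PE_q k) →ₗ[k] (Fin 8 → k) where
  toFun r := (PE_phibar r : Module.End k (Fin 8 → k)) (PE_e0 k)
  map_add' x y := by simp
  map_smul' c x := by simp

def PE_mon (k : Type*) [Field k] : Fin 8 → PE_P k :=
  ![1, X 0, X 1, X 2, X 0 ^ 2, X 0 * X 1, X 0 * X 2, X 0 ^ 3]

def PE_B (k : Type*) [Field k] : Fin 8 → (PE_P k ⧸ PE_q k) :=
  fun i => Ideal.Quotient.mk (PE_q k) (PE_mon k i)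

lemma PE_phibar_mk (p : PE_P k) :
    PE_phibar (Ideal.Quotient.mk (PE_q k) p) = PE_phi (k := k) p := by
  rw [PE_phibar, Ideal.Quotient.liftₐ_apply]
  rfl

lemma PE_mu_mk (p : PE_P k) :
    PE_mu (k := k) (Ideal.Quotient.mk (PE_q k) p)
      = (PE_phi (k := k) p : Module.End k (Fin 8 → k)) (PE_e0 k) := by
  show (PE_phibar (Ideal.Quotient.mk (PE_q k) p) : Module.End k (Fin 8 → k)) (PE_e0 k) = _
  rw [PE_phibar_mk]

lemma PE_val_phi_X0 :
    ((PE_phi (k := k) (X 0)) : Module.End k (Fin 8 → k)) = PE_N0 k := by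
  rw [PE_phi, aeval_X]; exact PE_f0

lemma PE_val_phi_X1 :
    ((PE_phi (k := k) (X 1)) : Module.End k (Fin 8 → k)) = PE_N1 k := by
  rw [PE_phi, aeval_X]; exact PE_f1

lemma PE_val_phi_X2 :
    ((PE_phi (k := k) (X 2)) : Module.End k (Fin 8 → k)) = PE_N2 k := by
  rw [PE_phi, aeval_X]; exact PE_f2

lemma PE_a00 : PE_N0 k (PE_e0 k) = Pi.single 1 1 := by
  funext j; fin_cases j <;> simp [PE_N0_apply, PE_e0, Pi.single_apply]

lemma PE_a10 : PE_N1 k (PE_e0 k) = Pi.single 2 1 := by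
  funext j; fin_cases j <;> simp [PE_N1_apply, PE_e0, Pi.single_apply]

lemma PE_a20 : PE_N2 k (PE_e0 k) = Pi.single 3 1 := by
  funext j; fin_cases j <;> simp [PE_N2_apply, PE_e0, Pi.single_apply]

lemma PE_a01 : PE_N0 k (Pi.single 1 1) = Pi.single 4 (1 : k) := by
  funext j; fin_cases j <;> simp [PE_N0_apply, Pi.single_apply]

lemma PE_a02 : PE_N0 k (Pi.single 2 1) = Pi.single 5 (1 : k) := by
  funext j; fin_cases j <;> simp [PE_N0_apply, Pi.single_apply]

lemma PE_a03 : PE_N0 k (Pi.single 3 1) = Pi.single 6 (1 : k) := by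
  funext j; fin_cases j <;> simp [PE_N0_apply, Pi.single_apply]

lemma PE_a04 : PE_N0 k (Pi.single 4 1) = Pi.single 7 (1 : k) := by
  funext j; fin_cases j <;> simp [PE_N0_apply, Pi.single_apply]

lemma PE_mu_B0 : PE_mu (k := k) (PE_B k 0) = Pi.single (0 : Fin 8) (1 : k) := by
  show PE_mu (k := k) (Ideal.Quotient.mk (PE_q k) 1) = _
  rw [PE_mu_mk, map_one, OneMemClass.coe_one, Module.End.one_apply]
  rfl

lemma PE_mu_B1 : PE_mu (k := k) (PE_B k 1) = Pi.single (1 : Fin 8) (1 : k) := by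
  show PE_mu (k := k) (Ideal.Quotient.mk (PE_q k) (X 0)) = _
  rw [PE_mu_mk, PE_val_phi_X0, PE_a00]

lemma PE_mu_B2 : PE_mu (k := k) (PE_B k 2) = Pi.single (2 : Fin 8) (1 : k) := by
  show PE_mu (k := k) (Ideal.Quotient.mk (PE_q k) (X 1)) = _
  rw [PE_mu_mk, PE_val_phi_X1, PE_a10]

lemma PE_mu_B3 : PE_mu (k := k) (PE_B k 3) = Pi.single (3 : Fin 8) (1 : k) := by
  show PE_mu (k := k) (Ideal.Quotient.mk (PE_q k) (X 2)) = _
  rw [PE_mu_mk, PE_val_phi_X2, PE_a20]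

lemma PE_mu_B4 : PE_mu (k := k) (PE_B k 4) = Pi.single (4 : Fin 8) (1 : k) := by
  show PE_mu (k := k) (Ideal.Quotient.mk (PE_q k) (X 0 ^ 2)) = _
  rw [PE_mu_mk, map_pow, SubmonoidClass.coe_pow, PE_val_phi_X0, sq,
    Module.End.mul_apply, PE_a00, PE_a01]

lemma PE_mu_B5 : PE_mu (k := k) (PE_B k 5) = Pi.single (5 : Fin 8) (1 : k) := by
  show PE_mu (k := k) (Ideal.Quotient.mk (PE_q k) (X 0 * X 1)) = _
  rw [PE_mu_mk, map_mul, MulMemClass.coe_mul, PE_val_phi_X0, PE_val_phi_X1,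
    Module.End.mul_apply, PE_a10, PE_a02]

lemma PE_mu_B6 : PE_mu (k := k) (PE_B k 6) = Pi.single (6 : Fin 8) (1 : k) := by
  show PE_mu (k := k) (Ideal.Quotient.mk (PE_q k) (X 0 * X 2)) = _
  rw [PE_mu_mk, map_mul, MulMemClass.coe_mul, PE_val_phi_X0, PE_val_phi_X2,
    Module.End.mul_apply, PE_a20, PE_a03]

lemma PE_mu_B7 : PE_mu (k := k) (PE_B k 7) = Pi.single (7 : Fin 8) (1 : k) := by
  show PE_mu (k := k) (Ideal.Quotient.mk (PE_q k) (X 0 ^ 3)) = _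
  rw [PE_mu_mk, map_pow, SubmonoidClass.coe_pow, PE_val_phi_X0,
    pow_succ, pow_succ, pow_one, Module.End.mul_apply, Module.End.mul_apply,
    PE_a00, PE_a01, PE_a04]

lemma PE_mu_B : ∀ i, PE_mu (k := k) (PE_B k i) = Pi.single i (1 : k) := by
  intro i
  fin_cases i
  exacts [PE_mu_B0, PE_mu_B1, PE_mu_B2, PE_mu_B3, PE_mu_B4, PE_mu_B5, PE_mu_B6, PE_mu_B7]

lemma PE_li : LinearIndependent k (PE_B k) := by
  have h : LinearIndependent k (PE_mu (k := k) ∘ PE_B k) := by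
    have heq : PE_mu (k := k) ∘ PE_B k = fun i => Pi.single i (1 : k) := funext PE_mu_B
    rw [heq]
    have hb := (Pi.basisFun k (Fin 8)).linearIndependent
    have hbe : ⇑(Pi.basisFun k (Fin 8)) = fun i => Pi.single i (1 : k) := by
      funext i; exact Pi.basisFun_apply k (Fin 8) i
    rwa [hbe] at hb
  exact LinearIndependent.of_comp PE_mu h

/-! ### Spanning -/

lemma PE_B0_eq : PE_B k 0 = Ideal.Quotient.mk (PE_q k) (1 : PE_P k) := rfl
lemma PE_B1_eq : PE_B k 1 = Ideal.Quotient.mk (PE_q k) (X 0 : PE_P k) := rfl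
lemma PE_B2_eq : PE_B k 2 = Ideal.Quotient.mk (PE_q k) (X 1 : PE_P k) := rfl
lemma PE_B3_eq : PE_B k 3 = Ideal.Quotient.mk (PE_q k) (X 2 : PE_P k) := rfl
lemma PE_B4_eq : PE_B k 4 = Ideal.Quotient.mk (PE_q k) (X 0 ^ 2 : PE_P k) := rfl
lemma PE_B5_eq : PE_B k 5 = Ideal.Quotient.mk (PE_q k) (X 0 * X 1 : PE_P k) := rfl
lemma PE_B6_eq : PE_B k 6 = Ideal.Quotient.mk (PE_q k) (X 0 * X 2 : PE_P k) := rfl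
lemma PE_B7_eq : PE_B k 7 = Ideal.Quotient.mk (PE_q k) (X 0 ^ 3 : PE_P k) := rfl

lemma PE_k00 : Ideal.Quotient.mk (PE_q k) ((X 0 : PE_P k) * (1))
    ∈ Submodule.span k (Set.range (PE_B k)) := by
  have h : Ideal.Quotient.mk (PE_q k) ((X 0 : PE_P k) * (1)) = PE_B k 1 := by
    rw [PE_B1_eq]
    try exact Ideal.Quotient.eq.mpr (PE_mem_q (a := 0) (b := 0) (c := 0) (by ring))
  rw [h]
  exact Submodule.subset_span ⟨1, rfl⟩

lemma PE_k01 : Ideal.Quotient.mk (PE_q k) ((X 0 : PE_P k) * (X 0))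
    ∈ Submodule.span k (Set.range (PE_B k)) := by
  have h : Ideal.Quotient.mk (PE_q k) ((X 0 : PE_P k) * (X 0)) = PE_B k 4 := by
    rw [PE_B4_eq]
    try exact Ideal.Quotient.eq.mpr (PE_mem_q (a := 0) (b := 0) (c := 0) (by ring))
  rw [h]
  exact Submodule.subset_span ⟨4, rfl⟩

lemma PE_k02 : Ideal.Quotient.mk (PE_q k) ((X 0 : PE_P k) * (X 1))
    ∈ Submodule.span k (Set.range (PE_B k)) := by
  have h : Ideal.Quotient.mk (PE_q k) ((X 0 : PE_P k) * (X 1)) = PE_B k 5 := by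
    rw [PE_B5_eq]
    try exact Ideal.Quotient.eq.mpr (PE_mem_q (a := 0) (b := 0) (c := 0) (by ring))
  rw [h]
  exact Submodule.subset_span ⟨5, rfl⟩

lemma PE_k03 : Ideal.Quotient.mk (PE_q k) ((X 0 : PE_P k) * (X 2))
    ∈ Submodule.span k (Set.range (PE_B k)) := by
  have h : Ideal.Quotient.mk (PE_q k) ((X 0 : PE_P k) * (X 2)) = PE_B k 6 := by
    rw [PE_B6_eq]
    try exact Ideal.Quotient.eq.mpr (PE_mem_q (a := 0) (b := 0) (c := 0) (by ring))
  rw [h]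
  exact Submodule.subset_span ⟨6, rfl⟩

lemma PE_k04 : Ideal.Quotient.mk (PE_q k) ((X 0 : PE_P k) * (X 0 ^ 2))
    ∈ Submodule.span k (Set.range (PE_B k)) := by
  have h : Ideal.Quotient.mk (PE_q k) ((X 0 : PE_P k) * (X 0 ^ 2)) = PE_B k 7 := by
    rw [PE_B7_eq]
    try exact Ideal.Quotient.eq.mpr (PE_mem_q (a := 0) (b := 0) (c := 0) (by ring))
  rw [h]
  exact Submodule.subset_span ⟨7, rfl⟩

lemma PE_k05 : Ideal.Quotient.mk (PE_q k) ((X 0 : PE_P k) * (X 0 * X 1))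
    ∈ Submodule.span k (Set.range (PE_B k)) := by
  have h : Ideal.Quotient.mk (PE_q k) ((X 0 : PE_P k) * (X 0 * X 1)) = 0 :=
    Ideal.Quotient.eq_zero_iff_mem.mpr (PE_mem_q (a := -(X 1)) (b := X 2) (c := 0) (by ring))
  rw [h]
  exact zero_mem _

lemma PE_k06 : Ideal.Quotient.mk (PE_q k) ((X 0 : PE_P k) * (X 0 * X 2))
    ∈ Submodule.span k (Set.range (PE_B k)) := by
  have h : Ideal.Quotient.mk (PE_q k) ((X 0 : PE_P k) * (X 0 * X 2)) = 0 :=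
    Ideal.Quotient.eq_zero_iff_mem.mpr (PE_mem_q (a := 0) (b := X 1) (c := -(X 2)) (by ring))
  rw [h]
  exact zero_mem _

lemma PE_k07 : Ideal.Quotient.mk (PE_q k) ((X 0 : PE_P k) * (X 0 ^ 3))
    ∈ Submodule.span k (Set.range (PE_B k)) := by
  have h : Ideal.Quotient.mk (PE_q k) ((X 0 : PE_P k) * (X 0 ^ 3)) = 0 :=
    Ideal.Quotient.eq_zero_iff_mem.mpr (PE_mem_q (a := -(X 0 ^ 2)) (b := X 1 * X 2) (c := -(X 2 ^ 2)) (by ring))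
  rw [h]
  exact zero_mem _

lemma PE_k10 : Ideal.Quotient.mk (PE_q k) ((X 1 : PE_P k) * (1))
    ∈ Submodule.span k (Set.range (PE_B k)) := by
  have h : Ideal.Quotient.mk (PE_q k) ((X 1 : PE_P k) * (1)) = PE_B k 2 := by
    rw [PE_B2_eq]
    try exact Ideal.Quotient.eq.mpr (PE_mem_q (a := 0) (b := 0) (c := 0) (by ring))
  rw [h]
  exact Submodule.subset_span ⟨2, rfl⟩

lemma PE_k11 : Ideal.Quotient.mk (PE_q k) ((X 1 : PE_P k) * (X 0))
    ∈ Submodule.span k (Set.range (PE_B k)) := by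
  have h : Ideal.Quotient.mk (PE_q k) ((X 1 : PE_P k) * (X 0)) = PE_B k 5 := by
    rw [PE_B5_eq]
    try exact Ideal.Quotient.eq.mpr (PE_mem_q (a := 0) (b := 0) (c := 0) (by ring))
  rw [h]
  exact Submodule.subset_span ⟨5, rfl⟩

lemma PE_k12 : Ideal.Quotient.mk (PE_q k) ((X 1 : PE_P k) * (X 1))
    ∈ Submodule.span k (Set.range (PE_B k)) := by
  have h : Ideal.Quotient.mk (PE_q k) ((X 1 : PE_P k) * (X 1)) = PE_B k 4 := by
    rw [PE_B4_eq]
    try exact Ideal.Quotient.eq.mpr (PE_mem_q (a := 0) (b := 0) (c := 1) (by ring))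
  rw [h]
  exact Submodule.subset_span ⟨4, rfl⟩

lemma PE_k13 : Ideal.Quotient.mk (PE_q k) ((X 1 : PE_P k) * (X 2))
    ∈ Submodule.span k (Set.range (PE_B k)) := by
  have h : Ideal.Quotient.mk (PE_q k) ((X 1 : PE_P k) * (X 2)) = 0 :=
    Ideal.Quotient.eq_zero_iff_mem.mpr (PE_mem_q (a := 0) (b := 1) (c := 0) (by ring))
  rw [h]
  exact zero_mem _

lemma PE_k14 : Ideal.Quotient.mk (PE_q k) ((X 1 : PE_P k) * (X 0 ^ 2))
    ∈ Submodule.span k (Set.range (PE_B k)) := by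
  have h : Ideal.Quotient.mk (PE_q k) ((X 1 : PE_P k) * (X 0 ^ 2)) = 0 :=
    Ideal.Quotient.eq_zero_iff_mem.mpr (PE_mem_q (a := -(X 1)) (b := X 2) (c := 0) (by ring))
  rw [h]
  exact zero_mem _

lemma PE_k15 : Ideal.Quotient.mk (PE_q k) ((X 1 : PE_P k) * (X 0 * X 1))
    ∈ Submodule.span k (Set.range (PE_B k)) := by
  have h : Ideal.Quotient.mk (PE_q k) ((X 1 : PE_P k) * (X 0 * X 1)) = PE_B k 7 := by
    rw [PE_B7_eq]
    try exact Ideal.Quotient.eq.mpr (PE_mem_q (a := 0) (b := 0) (c := X 0) (by ring))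
  rw [h]
  exact Submodule.subset_span ⟨7, rfl⟩

lemma PE_k16 : Ideal.Quotient.mk (PE_q k) ((X 1 : PE_P k) * (X 0 * X 2))
    ∈ Submodule.span k (Set.range (PE_B k)) := by
  have h : Ideal.Quotient.mk (PE_q k) ((X 1 : PE_P k) * (X 0 * X 2)) = 0 :=
    Ideal.Quotient.eq_zero_iff_mem.mpr (PE_mem_q (a := 0) (b := X 0) (c := 0) (by ring))
  rw [h]
  exact zero_mem _

lemma PE_k17 : Ideal.Quotient.mk (PE_q k) ((X 1 : PE_P k) * (X 0 ^ 3))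
    ∈ Submodule.span k (Set.range (PE_B k)) := by
  have h : Ideal.Quotient.mk (PE_q k) ((X 1 : PE_P k) * (X 0 ^ 3)) = 0 :=
    Ideal.Quotient.eq_zero_iff_mem.mpr (PE_mem_q (a := -(X 0 * X 1)) (b := X 0 * X 2) (c := 0) (by ring))
  rw [h]
  exact zero_mem _

lemma PE_k20 : Ideal.Quotient.mk (PE_q k) ((X 2 : PE_P k) * (1))
    ∈ Submodule.span k (Set.range (PE_B k)) := by
  have h : Ideal.Quotient.mk (PE_q k) ((X 2 : PE_P k) * (1)) = PE_B k 3 := by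
    rw [PE_B3_eq]
    try exact Ideal.Quotient.eq.mpr (PE_mem_q (a := 0) (b := 0) (c := 0) (by ring))
  rw [h]
  exact Submodule.subset_span ⟨3, rfl⟩

lemma PE_k21 : Ideal.Quotient.mk (PE_q k) ((X 2 : PE_P k) * (X 0))
    ∈ Submodule.span k (Set.range (PE_B k)) := by
  have h : Ideal.Quotient.mk (PE_q k) ((X 2 : PE_P k) * (X 0)) = PE_B k 6 := by
    rw [PE_B6_eq]
    try exact Ideal.Quotient.eq.mpr (PE_mem_q (a := 0) (b := 0) (c := 0) (by ring))
  rw [h]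
  exact Submodule.subset_span ⟨6, rfl⟩

lemma PE_k22 : Ideal.Quotient.mk (PE_q k) ((X 2 : PE_P k) * (X 1))
    ∈ Submodule.span k (Set.range (PE_B k)) := by
  have h : Ideal.Quotient.mk (PE_q k) ((X 2 : PE_P k) * (X 1)) = 0 :=
    Ideal.Quotient.eq_zero_iff_mem.mpr (PE_mem_q (a := 0) (b := 1) (c := 0) (by ring))
  rw [h]
  exact zero_mem _

lemma PE_k23 : Ideal.Quotient.mk (PE_q k) ((X 2 : PE_P k) * (X 2))
    ∈ Submodule.span k (Set.range (PE_B k)) := by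
  have h : Ideal.Quotient.mk (PE_q k) ((X 2 : PE_P k) * (X 2)) = PE_B k 4 := by
    rw [PE_B4_eq]
    try exact Ideal.Quotient.eq.mpr (PE_mem_q (a := 1) (b := 0) (c := 0) (by ring))
  rw [h]
  exact Submodule.subset_span ⟨4, rfl⟩

lemma PE_k24 : Ideal.Quotient.mk (PE_q k) ((X 2 : PE_P k) * (X 0 ^ 2))
    ∈ Submodule.span k (Set.range (PE_B k)) := by
  have h : Ideal.Quotient.mk (PE_q k) ((X 2 : PE_P k) * (X 0 ^ 2)) = 0 :=
    Ideal.Quotient.eq_zero_iff_mem.mpr (PE_mem_q (a := 0) (b := X 1) (c := -(X 2)) (by ring))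
  rw [h]
  exact zero_mem _

lemma PE_k25 : Ideal.Quotient.mk (PE_q k) ((X 2 : PE_P k) * (X 0 * X 1))
    ∈ Submodule.span k (Set.range (PE_B k)) := by
  have h : Ideal.Quotient.mk (PE_q k) ((X 2 : PE_P k) * (X 0 * X 1)) = 0 :=
    Ideal.Quotient.eq_zero_iff_mem.mpr (PE_mem_q (a := 0) (b := X 0) (c := 0) (by ring))
  rw [h]
  exact zero_mem _

lemma PE_k26 : Ideal.Quotient.mk (PE_q k) ((X 2 : PE_P k) * (X 0 * X 2))
    ∈ Submodule.span k (Set.range (PE_B k)) := by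
  have h : Ideal.Quotient.mk (PE_q k) ((X 2 : PE_P k) * (X 0 * X 2)) = PE_B k 7 := by
    rw [PE_B7_eq]
    try exact Ideal.Quotient.eq.mpr (PE_mem_q (a := X 0) (b := 0) (c := 0) (by ring))
  rw [h]
  exact Submodule.subset_span ⟨7, rfl⟩

lemma PE_k27 : Ideal.Quotient.mk (PE_q k) ((X 2 : PE_P k) * (X 0 ^ 3))
    ∈ Submodule.span k (Set.range (PE_B k)) := by
  have h : Ideal.Quotient.mk (PE_q k) ((X 2 : PE_P k) * (X 0 ^ 3)) = 0 :=
    Ideal.Quotient.eq_zero_iff_mem.mpr (PE_mem_q (a := 0) (b := X 0 * X 1) (c := -(X 0 * X 2)) (by ring))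
  rw [h]
  exact zero_mem _

lemma PE_key0 : ∀ j : Fin 8, Ideal.Quotient.mk (PE_q k) (X 0 * PE_mon k j)
    ∈ Submodule.span k (Set.range (PE_B k)) := by
  intro j
  fin_cases j
  exacts [PE_k00, PE_k01, PE_k02, PE_k03, PE_k04, PE_k05, PE_k06, PE_k07]

lemma PE_key1 : ∀ j : Fin 8, Ideal.Quotient.mk (PE_q k) (X 1 * PE_mon k j)
    ∈ Submodule.span k (Set.range (PE_B k)) := by
  intro j
  fin_cases j
  exacts [PE_k10, PE_k11, PE_k12, PE_k13, PE_k14, PE_k15, PE_k16, PE_k17]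

lemma PE_key2 : ∀ j : Fin 8, Ideal.Quotient.mk (PE_q k) (X 2 * PE_mon k j)
    ∈ Submodule.span k (Set.range (PE_B k)) := by
  intro j
  fin_cases j
  exacts [PE_k20, PE_k21, PE_k22, PE_k23, PE_k24, PE_k25, PE_k26, PE_k27]

lemma PE_key : ∀ (n : Fin 3) (j : Fin 8), Ideal.Quotient.mk (PE_q k) (X n * PE_mon k j)
    ∈ Submodule.span k (Set.range (PE_B k)) := by
  intro n
  fin_cases n
  exacts [PE_key0, PE_key1, PE_key2]

lemma PE_mk_C (a : k) : Ideal.Quotient.mk (PE_q k) (C a) = a • PE_B k 0 := by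
  rw [PE_B0_eq, map_one, ← Algebra.algebraMap_eq_smul_one, ← Ideal.Quotient.mk_algebraMap,
    algebraMap_eq]

lemma PE_span : ∀ r : PE_P k ⧸ PE_q k, r ∈ Submodule.span k (Set.range (PE_B k)) := by
  have hBmem : ∀ j, PE_B k j ∈ Submodule.span k (Set.range (PE_B k)) :=
    fun j => Submodule.subset_span ⟨j, rfl⟩
  have hmul : ∀ (n : Fin 3), ∀ s ∈ Submodule.span k (Set.range (PE_B k)),
      Ideal.Quotient.mk (PE_q k) (X n) * s ∈ Submodule.span k (Set.range (PE_B k)) := by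
    intro n s hs
    refine Submodule.span_induction ?_ ?_ ?_ ?_ hs
    · rintro x ⟨j, rfl⟩
      rw [show Ideal.Quotient.mk (PE_q k) (X n) * PE_B k j
            = Ideal.Quotient.mk (PE_q k) (X n * PE_mon k j) from (map_mul _ _ _).symm]
      exact PE_key n j
    · simp
    · intro x y _ _ hx hy
      rw [mul_add]; exact add_mem hx hy
    · intro c x _ hx
      rw [mul_smul_comm]; exact Submodule.smul_mem _ _ hx
  intro r
  obtain ⟨p, rfl⟩ := Ideal.Quotient.mk_surjective r
  induction p using MvPolynomial.induction_on with
  | C a =>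
      rw [PE_mk_C]
      exact Submodule.smul_mem _ _ (hBmem 0)
  | add p q hp hq =>
      rw [map_add]; exact add_mem hp hq
  | mul_X p n hp =>
      rw [show Ideal.Quotient.mk (PE_q k) (p * X n)
            = Ideal.Quotient.mk (PE_q k) (X n) * Ideal.Quotient.mk (PE_q k) p by
          rw [← map_mul]; ring_nf]
      exact hmul n _ hp

def PE_basis : Module.Basis (Fin 8) k (PE_P k ⧸ PE_q k) :=
  Module.Basis.mk PE_li (fun x _ => PE_span x)

lemma PE_findim : FiniteDimensional k (PE_P k ⧸ PE_q k) :=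
  Module.Finite.of_basis (PE_basis (k := k))

lemma PE_finrank : Module.finrank k (PE_P k ⧸ PE_q k) = 8 := by
  rw [Module.finrank_eq_card_basis (PE_basis (k := k))]
  simp

end PrimaryEightAux

theorem primary_ideal_example_dimension_eight
    {k : Type*} [Field k] :
    (Ideal.span {(X 2 : MvPolynomial (Fin 3) k) ^ 2 - X 0 ^ 2, X 1 * X 2,
        X 1 ^ 2 - X 0 ^ 2}).IsPrimary ∧
    (Ideal.span {(X 2 : MvPolynomial (Fin 3) k) ^ 2 - X 0 ^ 2, X 1 * X 2,
        X 1 ^ 2 - X 0 ^ 2}).radical =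
      Ideal.span {(X 0 : MvPolynomial (Fin 3) k), X 1, X 2} ∧
    (Ideal.span {(X 0 : MvPolynomial (Fin 3) k), X 1, X 2}).IsMaximal ∧
    FiniteDimensional k (MvPolynomial (Fin 3) k ⧸
      Ideal.span {(X 2 : MvPolynomial (Fin 3) k) ^ 2 - X 0 ^ 2, X 1 * X 2,
        X 1 ^ 2 - X 0 ^ 2}) ∧
    Module.finrank k (MvPolynomial (Fin 3) k ⧸
      Ideal.span {(X 2 : MvPolynomial (Fin 3) k) ^ 2 - X 0 ^ 2, X 1 * X 2,
        X 1 ^ 2 - X 0 ^ 2}) = 8 :=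
  ⟨PE_primary, PE_radical, PE_m_max, PE_findim, PE_finrank⟩
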